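/- Let G be the canonical system over a language with a single unary connective ∘, with rules ⟨∅, {p₁ ⇒}⟩ / ∘p₁ ⇒ and {p₁ ⇒} / ⇒ ∘p₁ (so applications have the forms: from Γ, φ ⇒ E infer Γ, ∘φ ⇒ E; and from Γ, φ ⇒ infer Γ ⇒ ∘φ). Then a sequent Γ ⇒ E is derivable in G from no assumptions if and only if E = {ψ} for some formula ψ such that ∘ⁿψ ∈ Γ for some n ≥ 0 (where ∘⁰ψ = ψ and ∘ⁿ⁺¹ψ = ∘(∘ⁿψ)). In particular, G is consistent but not coherent. -/

import Mathlib

/-- A propositional language: a type of connectives with arities. -/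
structure Lang where
  Conn : Type
  arity : Conn → ℕ

/-- Formulas over a language, with atoms indexed by ℕ. -/
inductive Fm (L : Lang) : Type
  | atom : ℕ → Fm L
  | conn : (c : L.Conn) → (Fin (L.arity c) → Fm L) → Fm L

/-- The substitution determined by its values on atoms. -/
def Fm.subst {L : Lang} (σ : ℕ → Fm L) : Fm L → Fm L
  | .atom n => σ n
  | .conn c f => .conn c (fun i => (f i).subst σ)

/-- A non-strict single-conclusion sequent Γ ⇒ E. -/
structure Sequent (L : Lang) where
  left : Set (Fm L)
  right : Option (Fm L)

/-- A Horn clause over atoms p₁,…,pₙ (represented by `Fin n`). -/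
structure Clause (n : ℕ) where
  lhs : Set (Fin n)
  rhs : Option (Fin n)

/-- A canonical right-introduction rule for a connective. -/
structure RightRule (L : Lang) where
  conn : L.Conn
  prem : Set (Clause (L.arity conn))

/-- A canonical left-introduction rule, with hard and soft premises. -/
structure LeftRule (L : Lang) where
  conn : L.Conn
  hard : Set (Clause (L.arity conn))
  soft : Set (Set (Fin (L.arity conn)))

/-- A canonical system: a collection of canonical rules. -/
structure CanSys (L : Lang) where
  rights : Set (RightRule L)
  lefts : Set (LeftRule L)

/-- The sequent obtained by instantiating a clause with a substitution. -/
def Clause.seq {L : Lang} {n : ℕ} (σ : Fin n → Fm L) (c : Clause n) : Sequent L :=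
  ⟨σ '' c.lhs, c.rhs.map σ⟩

/-- Derivability in a canonical system `G` from assumptions `S`,
where all cut formulas must belong to `C`. -/
inductive Deriv {L : Lang} (G : CanSys L) (S : Set (Sequent L)) (C : Set (Fm L)) :
    Sequent L → Prop
  | hyp {s : Sequent L} : s ∈ S → Deriv G S C s
  | ax (φ : Fm L) : Deriv G S C ⟨{φ}, some φ⟩
  | weakL {Γ Γ' : Set (Fm L)} {E : Option (Fm L)} :
      Deriv G S C ⟨Γ, E⟩ → Γ ⊆ Γ' → Deriv G S C ⟨Γ', E⟩
  | weakR {Γ : Set (Fm L)} (ψ : Fm L) :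
      Deriv G S C ⟨Γ, none⟩ → Deriv G S C ⟨Γ, some ψ⟩
  | cut {Γ Δ : Set (Fm L)} {φ : Fm L} {E : Option (Fm L)} :
      φ ∈ C → Deriv G S C ⟨Γ, some φ⟩ → Deriv G S C ⟨insert φ Δ, E⟩ →
      Deriv G S C ⟨Γ ∪ Δ, E⟩
  | right {Γ : Set (Fm L)} (rr : RightRule L) (hr : rr ∈ G.rights)
      (σ : Fin (L.arity rr.conn) → Fm L) :
      (∀ c ∈ rr.prem, Deriv G S C ⟨Γ ∪ σ '' c.lhs, c.rhs.map σ⟩) →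
      Deriv G S C ⟨Γ, some (Fm.conn rr.conn σ)⟩
  | left {Γ : Set (Fm L)} {E : Option (Fm L)} (lr : LeftRule L) (hl : lr ∈ G.lefts)
      (σ : Fin (L.arity lr.conn) → Fm L) :
      (∀ c ∈ lr.hard, Deriv G S C ⟨Γ ∪ σ '' c.lhs, c.rhs.map σ⟩) →
      (∀ t ∈ lr.soft, Deriv G S C ⟨Γ ∪ σ '' t, E⟩) →
      Deriv G S C ⟨insert (Fm.conn lr.conn σ) Γ, E⟩

/-- The set of formulas occurring in some sequent of `S`. -/
def cutFms {L : Lang} (S : Set (Sequent L)) : Set (Fm L) :=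
  {φ | ∃ s ∈ S, φ ∈ s.left ∨ s.right = some φ}

/-- Classical satisfaction of a Horn clause by a two-valued assignment. -/
def Clause.sat {n : ℕ} (v : Fin n → Bool) (c : Clause n) : Prop :=
  (∃ p ∈ c.lhs, v p = false) ∨ (∃ q, c.rhs = some q ∧ v q = true)

/-- Joint classical satisfiability of the premises of a left rule and a right rule. -/
def JointSat {L : Lang} (lr : LeftRule L) (rr : RightRule L)
    (h : L.arity lr.conn = L.arity rr.conn) : Prop :=
  ∃ v : Fin (L.arity lr.conn) → Bool,
    (∀ c ∈ lr.hard, c.sat v) ∧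
    (∀ t ∈ lr.soft, ∃ p ∈ t, v p = false) ∧
    (∀ c ∈ rr.prem, c.sat (fun i => v (Fin.cast h.symm i)))

/-- Coherence: matching left/right rule pairs have jointly unsatisfiable premises. -/
def Coherent {L : Lang} (G : CanSys L) : Prop :=
  ∀ lr ∈ G.lefts, ∀ rr ∈ G.rights, ∀ h : lr.conn = rr.conn,
    ¬ JointSat lr rr (congrArg L.arity h)

section Semantics

variable {L : Lang} {W : Type}

/-- A sequent is locally true at a world. -/
def locT (v : W → Fm L → Bool) (a : W) (s : Sequent L) : Prop :=
  (∃ ψ ∈ s.left, v a ψ = false) ∨ (∃ φ, s.right = some φ ∧ v a φ = true)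

/-- A sequent is (absolutely) true at a world: locally true at all successors. -/
def absT (le : W → W → Prop) (v : W → Fm L → Bool) (a : W) (s : Sequent L) : Prop :=
  ∀ b, le a b → locT v b s

/-- Persistence of a valuation. -/
def PersistentU (le : W → W → Prop) (v : W → Fm L → Bool) : Prop :=
  ∀ (φ : Fm L) (a b : W), le a b → v a φ = true → v b φ = true

/-- A valuation respects a right-introduction rule. -/
def RespR (le : W → W → Prop) (v : W → Fm L → Bool) (rr : RightRule L) : Prop :=
  ∀ (a : W) (σ : Fin (L.arity rr.conn) → Fm L),
    (∀ c ∈ rr.prem, absT le v a (c.seq σ)) → v a (Fm.conn rr.conn σ) = true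

/-- A valuation respects a left-introduction rule. -/
def RespL (le : W → W → Prop) (v : W → Fm L → Bool) (lr : LeftRule L) : Prop :=
  ∀ (a : W) (σ : Fin (L.arity lr.conn) → Fm L),
    (∀ c ∈ lr.hard, absT le v a (c.seq σ)) →
    (∀ t ∈ lr.soft, locT v a ⟨σ '' t, (none : Option (Fm L))⟩) →
    v a (Fm.conn lr.conn σ) = false

/-- A valuation is G-legal: it respects all rules of G. -/
def LegalU (G : CanSys L) (le : W → W → Prop) (v : W → Fm L → Bool) : Prop :=
  (∀ rr ∈ G.rights, RespR le v rr) ∧ (∀ lr ∈ G.lefts, RespL le v lr)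

end Semantics

/-- Semantic consequence: every G-legal frame which is a model of S is a model of s. -/
def SemConseq {L : Lang} (G : CanSys L) (S : Set (Sequent L)) (s : Sequent L) : Prop :=
  ∀ (W : Type) (le : W → W → Prop),
    (∀ a, le a a) → (∀ a b c, le a b → le b c → le a c) →
    (∀ a b, le a b → le b a → a = b) → Nonempty W →
    ∀ v : W → Fm L → Bool, PersistentU le v → LegalU G le v →
      (∀ t ∈ S, ∀ a, locT v a t) → (∀ a, locT v a s)

/-- The language with a single unary connective ∘. -/
def L1 : Lang := ⟨Unit, fun _ => 1⟩

/-- The right rule {p₁ ⇒} / ⇒ ∘p₁. -/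
def circRight : RightRule L1 := ⟨(), ({⟨{0}, none⟩} : Set (Clause 1))⟩

/-- The left rule ⟨∅, {p₁ ⇒}⟩ / ∘p₁ ⇒. -/
def circLeft : LeftRule L1 := ⟨(), (∅ : Set (Clause 1)), ({{0}} : Set (Set (Fin 1)))⟩

/-- The canonical system G with the two rules for ∘. -/
def Gcirc : CanSys L1 := ⟨{circRight}, {circLeft}⟩

/-- ∘ⁿψ. -/
def circ : ℕ → Fm L1 → Fm L1
  | 0, ψ => ψ
  | n + 1, ψ => Fm.conn () (fun _ => circ n ψ)

lemma circ_add (a b : ℕ) (ψ : Fm L1) : circ (a + b) ψ = circ a (circ b ψ) := by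
  induction a with
  | zero => simp [circ, Nat.zero_add]
  | succ a ih => rw [Nat.succ_add]; simp [circ, ih]

lemma circ_fwd {s : Sequent L1} (h : Deriv Gcirc ∅ Set.univ s) :
    ∃ (ψ : Fm L1) (n : ℕ), s.right = some ψ ∧ circ n ψ ∈ s.left := by
  induction h with
  | hyp hs => exact hs.elim
  | ax φ => exact ⟨φ, 0, rfl, rfl⟩
  | weakL h hsub ih =>
    obtain ⟨ψ, n, h1, h2⟩ := ih
    exact ⟨ψ, n, h1, hsub h2⟩
  | weakR ψ h ih =>
    obtain ⟨ψ', n, h1, _⟩ := ih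
    exact absurd h1 (by simp)
  | cut hφ h1 h2 ih1 ih2 =>
    obtain ⟨ψ1, n1, e1, m1⟩ := ih1
    obtain ⟨ψ, n, e2, m2⟩ := ih2
    rcases m2 with m2 | m2
    · -- circ n ψ = φ
      simp only [Option.some.injEq] at e1
      refine ⟨ψ, n1 + n, e2, Or.inl ?_⟩
      rw [circ_add]
      rw [m2, e1] at *
      exact m1
    · exact ⟨ψ, n, e2, Or.inr m2⟩
  | right rr hr σ hprem ih =>
    have hrr : rr = circRight := hr
    subst hrr
    obtain ⟨ψ, n, h1, _⟩ := ih (⟨{0}, none⟩ : Clause 1) rfl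
    exact absurd h1 (by intro h; cases h)
  | left lr hl σ hhard hsoft ihh ihs =>
    have hlr : lr = circLeft := hl
    subst hlr
    obtain ⟨ψ, n, h1, h2⟩ := ihs ({0} : Set (Fin 1)) rfl
    rcases h2 with h2 | h2
    · exact ⟨ψ, n, h1, Set.mem_insert_iff.2 (Or.inr h2)⟩
    · obtain ⟨i, _, h2⟩ := h2
      refine ⟨ψ, n + 1, h1, Set.mem_insert_iff.2 (Or.inl ?_)⟩
      show circ (n + 1) ψ = Fm.conn () σ
      have hσ : σ = fun _ => circ n ψ := by
        funext j
        have hj : j = i := Subsingleton.elim (α := Fin 1) j i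
        rw [hj, h2]
      rw [hσ]
      rfl

lemma circ_bwd (ψ : Fm L1) (n : ℕ) :
    Deriv Gcirc ∅ Set.univ ⟨{circ n ψ}, some ψ⟩ := by
  induction n with
  | zero => exact Deriv.ax ψ
  | succ n ih =>
    have h := Deriv.left (G := Gcirc) (S := ∅) (C := Set.univ)
      (Γ := (∅ : Set (Fm L1))) (E := some ψ) circLeft rfl (fun _ => circ n ψ)
      (fun c hc => hc.elim)
      (by
        intro t ht
        have h : t = ({0} : Set (Fin 1)) := ht
        subst h
        exact Deriv.weakL ih (fun x hx => Or.inr ⟨(0 : Fin 1), rfl, hx.symm⟩))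
    simp at h; exact h

/-- A sequent Γ ⇒ E is derivable in G from no assumptions iff
E = {ψ} with ∘ⁿψ ∈ Γ for some n; in particular G is consistent but not coherent. -/
theorem circ_system_characterization :
    (∀ (Γ : Set (Fm L1)) (E : Option (Fm L1)),
      Deriv Gcirc ∅ Set.univ ⟨Γ, E⟩ ↔ ∃ (ψ : Fm L1) (n : ℕ), E = some ψ ∧ circ n ψ ∈ Γ) ∧
    ¬ Deriv Gcirc ∅ Set.univ ⟨{Fm.atom 0}, some (Fm.atom 1)⟩ ∧
    ¬ Coherent Gcirc := by
  refine ⟨fun Γ E => ⟨fun h => ?_, fun ⟨ψ, n, hE, hΓ⟩ => ?_⟩, fun h => ?_, fun hC => ?_⟩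
  · exact circ_fwd h
  · subst hE
    exact Deriv.weakL (circ_bwd ψ n) (by simpa using hΓ)
  · obtain ⟨ψ, n, h1, h2⟩ := circ_fwd h
    simp only [Option.some.injEq] at h1
    subst h1
    simp only [Set.mem_singleton_iff] at h2
    cases n with
    | zero => exact absurd h2 (by simp [circ])
    | succ n => exact absurd h2 (by simp [circ])
  · have := hC circLeft rfl circRight rfl rfl
    apply this
    refine ⟨fun _ => false, fun c hc => hc.elim, ?_, ?_⟩
    · intro t ht
      have h : t = ({0} : Set (Fin 1)) := ht
      subst h
      exact ⟨(0 : Fin 1), rfl, rfl⟩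
    · intro c hc
      have h : c = (⟨{0}, none⟩ : Clause 1) := hc
      subst h
      exact Or.inl ⟨(0 : Fin 1), rfl, rfl⟩
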